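/- arXiv:2303.08699 — 2 statements merged into one kernel-verified Lean document; each statement's English description precedes it below -/
import Mathlib

section
/- Every singular value of the correlation matrix W (W_{jk} = Tr[ρ σ_j⊗σ_k]) of a two-qubit density matrix ρ is at most 1. -/
noncomputable section
open Matrix Kronecker
open scoped ComplexOrder

/-- The Pauli matrices σ₁, σ₂, σ₃. -/
def σp : Fin 3 → Matrix (Fin 2) (Fin 2) ℂ :=
  ![!![0, 1; 1, 0], !![0, -Complex.I; Complex.I, 0], !![1, 0; 0, -1]]

/-- The matrix u·σ for a real vector u. -/
def pv (u : Fin 3 → ℝ) : Matrix (Fin 2) (Fin 2) ℂ :=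
  (u 0 : ℂ) • σp 0 + (u 1 : ℂ) • σp 1 + (u 2 : ℂ) • σp 2

lemma pv_herm (u : Fin 3 → ℝ) : (pv u)ᴴ = pv u := by
  ext i j
  fin_cases i <;> fin_cases j <;>
    simp [pv, σp, Matrix.conjTranspose_apply, Complex.ext_iff]

lemma pv_sq (u : Fin 3 → ℝ) :
    pv u * pv u = ((u 0 ^ 2 + u 1 ^ 2 + u 2 ^ 2 : ℝ) : ℂ) • 1 := by
  ext i j
  fin_cases i <;> fin_cases j <;>
      simp [pv, σp, Matrix.mul_apply, Fin.sum_univ_two, Complex.ext_iff,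
        ← Complex.ofReal_pow] <;>
      constructor <;> first | ring | trivial

/-- Correlation matrix W_{jk} = Tr[ρ (σ_j ⊗ σ_k)] (real part; W is in fact real). -/
def corr (ρ : Matrix (Fin 2 × Fin 2) (Fin 2 × Fin 2) ℂ) : Matrix (Fin 3) (Fin 3) ℝ :=
  Matrix.of fun j k => ((ρ * (σp j ⊗ₖ σp k)).trace).re

lemma corr_dot (ρ : Matrix (Fin 2 × Fin 2) (Fin 2 × Fin 2) ℂ) (u v : Fin 3 → ℝ) :
    u ⬝ᵥ (corr ρ) *ᵥ v = ((ρ * (pv u ⊗ₖ pv v)).trace).re := by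
  have h : pv u ⊗ₖ pv v =
      ∑ j : Fin 3, ∑ k : Fin 3, ((u j * v k : ℝ) : ℂ) • (σp j ⊗ₖ σp k) := by
    simp only [pv, Fin.sum_univ_three, add_kronecker, kronecker_add, smul_kronecker,
      kronecker_smul, smul_smul, Complex.ofReal_mul]
    module
  rw [h]
  simp [mul_add, Matrix.mul_smul, Matrix.trace_add, Matrix.trace_smul,
    corr, dotProduct, Matrix.mulVec,
    Fin.sum_univ_three, Complex.add_re, smul_eq_mul, Complex.ofReal_mul,
    Complex.mul_re, Complex.ofReal_re, Complex.ofReal_im]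
  ring

lemma trace_re_nonneg {n : Type*} [Fintype n] [DecidableEq n] {A : Matrix n n ℂ}
    (hA : A.PosSemidef) : 0 ≤ A.trace.re := by
  have h : ∀ i, 0 ≤ (A i i).re := fun i => by
    have := hA.re_dotProduct_nonneg (Pi.single i 1)
    simpa [dotProduct, Pi.single_apply] using this
  have : A.trace.re = ∑ i, (A i i).re := by
    simp [Matrix.trace, Matrix.diag, Complex.re_sum]
  rw [this]
  exact Finset.sum_nonneg fun i _ => h i

lemma trace_mul_psd_re_nonneg {n : Type*} [Fintype n] [DecidableEq n]
    {ρ N : Matrix n n ℂ} (hρ : ρ.PosSemidef) (hN : N.PosSemidef) :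
    0 ≤ ((ρ * N).trace).re := by
  obtain ⟨B, rfl⟩ : ∃ B : Matrix n n ℂ, N = Bᴴ * B := by
    open scoped MatrixOrder in exact CStarAlgebra.nonneg_iff_eq_star_mul_self.mp hN.nonneg
  rw [show ρ * (Bᴴ * B) = ρ * Bᴴ * B by rw [mul_assoc], Matrix.trace_mul_cycle]
  exact trace_re_nonneg (hρ.mul_mul_conjTranspose_same B)

lemma one_sub_psd {n : Type*} [Fintype n] [DecidableEq n] {M : Matrix n n ℂ}
    (hH : Mᴴ = M) (hsq : M * M = 1) : (1 - M).PosSemidef := by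
  set c : ℂ := ((Real.sqrt 2 : ℝ) : ℂ)⁻¹ with hc_def
  have hc : star c = c := by simp [hc_def, ← Complex.ofReal_inv]
  have hc2 : c * c = (2 : ℂ)⁻¹ := by
    rw [hc_def, ← mul_inv, ← Complex.ofReal_mul,
      Real.mul_self_sqrt (by norm_num : (0:ℝ) ≤ 2)]
    norm_num
  have expand : (c • (1 - M))ᴴ * (c • (1 - M)) = 1 - M := by
    rw [Matrix.conjTranspose_smul, Matrix.conjTranspose_sub, Matrix.conjTranspose_one, hH, hc,
      Matrix.smul_mul, Matrix.mul_smul, smul_smul, hc2]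
    have h2 : (1 - M) * (1 - M) = (2 : ℂ) • (1 - M) := by
      rw [sub_mul, mul_sub, mul_sub, hsq, one_mul, one_mul, mul_one, two_smul]
      abel
    rw [h2, smul_smul]
    norm_num
  rw [← expand]
  exact Matrix.posSemidef_conjTranspose_mul_self _

lemma kron_conjTranspose {A B : Matrix (Fin 2) (Fin 2) ℂ} :
    (A ⊗ₖ B)ᴴ = Aᴴ ⊗ₖ Bᴴ := by
  ext ⟨i1, i2⟩ ⟨j1, j2⟩
  simp [Matrix.conjTranspose_apply, star_mul', mul_comm]

lemma dot_le_one (ρ : Matrix (Fin 2 × Fin 2) (Fin 2 × Fin 2) ℂ)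
    (hpsd : ρ.PosSemidef) (htr : ρ.trace = 1) (u v : Fin 3 → ℝ)
    (hu : u 0 ^ 2 + u 1 ^ 2 + u 2 ^ 2 = 1) (hv : v 0 ^ 2 + v 1 ^ 2 + v 2 ^ 2 = 1) :
    u ⬝ᵥ (corr ρ) *ᵥ v ≤ 1 := by
  rw [corr_dot]
  set M := pv u ⊗ₖ pv v with hM
  have hH : Mᴴ = M := by rw [hM, kron_conjTranspose, pv_herm, pv_herm]
  have hsq : M * M = 1 := by
    rw [hM, ← Matrix.mul_kronecker_mul, pv_sq, pv_sq, hu, hv]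
    simp [Matrix.one_kronecker_one]
  have h1 : (1 - M).PosSemidef := one_sub_psd hH hsq
  have h2 : 0 ≤ ((ρ * (1 - M)).trace).re := trace_mul_psd_re_nonneg hpsd h1
  have h3 : (ρ * (1 - M)).trace = ρ.trace - (ρ * M).trace := by
    rw [mul_sub, mul_one, Matrix.trace_sub]
  rw [h3, htr] at h2
  simp only [Complex.sub_re, Complex.one_re] at h2
  linarith

/-- `s` is a singular value of W iff s ≥ 0 and s² is an eigenvalue of WᵀW. -/
def IsSingularValue (W : Matrix (Fin 3) (Fin 3) ℝ) (s : ℝ) : Prop :=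
  0 ≤ s ∧ (Wᵀ * W - s ^ 2 • (1 : Matrix (Fin 3) (Fin 3) ℝ)).det = 0

/-- Every singular value of the correlation matrix of a two-qubit density matrix is ≤ 1. -/
theorem singular_values_of_corr_le_one (ρ : Matrix (Fin 2 × Fin 2) (Fin 2 × Fin 2) ℂ)
    (hpsd : ρ.PosSemidef) (htr : ρ.trace = 1) :
    ∀ s : ℝ, IsSingularValue (corr ρ) s → s ≤ 1 := by
  rintro s ⟨hs0, hdet⟩
  set W := corr ρ with hW
  rcases eq_or_lt_of_le hs0 with h | hs
  · linarith
  obtain ⟨v, hv0, hv⟩ := Matrix.exists_mulVec_eq_zero_iff.mpr hdet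
  have heig : (Wᵀ * W) *ᵥ v = s ^ 2 • v := by
    have h1 := hv
    rw [Matrix.sub_mulVec, sub_eq_zero] at h1
    rw [h1, Matrix.smul_mulVec, Matrix.one_mulVec]
  have hnn : 0 ≤ v ⬝ᵥ v := Finset.sum_nonneg fun i _ => mul_self_nonneg (v i)
  have hvv : 0 < v ⬝ᵥ v := by
    rcases hnn.lt_or_eq with h | h
    · exact h
    · exact absurd (dotProduct_self_eq_zero.mp h.symm) hv0
  have hWv : (W *ᵥ v) ⬝ᵥ (W *ᵥ v) = s ^ 2 * (v ⬝ᵥ v) := by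
    have h1 : v ⬝ᵥ ((Wᵀ * W) *ᵥ v) = s ^ 2 * (v ⬝ᵥ v) := by
      rw [heig, dotProduct_smul, smul_eq_mul]
    have h2 : v ⬝ᵥ ((Wᵀ * W) *ᵥ v) = (W *ᵥ v) ⬝ᵥ (W *ᵥ v) := by
      rw [← Matrix.mulVec_mulVec, Matrix.dotProduct_mulVec, Matrix.vecMul_transpose]
    rw [← h2, h1]
  have dp3 : ∀ x : Fin 3 → ℝ, x 0 ^ 2 + x 1 ^ 2 + x 2 ^ 2 = x ⬝ᵥ x := fun x => by
    simp [dotProduct, Fin.sum_univ_three]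
    ring
  set t := Real.sqrt (v ⬝ᵥ v) with htdef
  have ht : 0 < t := Real.sqrt_pos.mpr hvv
  have ht2 : t * t = v ⬝ᵥ v := Real.mul_self_sqrt hnn
  set u' : Fin 3 → ℝ := (s * t)⁻¹ • (W *ᵥ v) with hu'def
  set v' : Fin 3 → ℝ := t⁻¹ • v with hv'def
  have hu1 : u' 0 ^ 2 + u' 1 ^ 2 + u' 2 ^ 2 = 1 := by
    rw [dp3, hu'def, smul_dotProduct, dotProduct_smul, smul_eq_mul,
      smul_eq_mul, hWv, ← ht2]
    field_simp
  have hv1 : v' 0 ^ 2 + v' 1 ^ 2 + v' 2 ^ 2 = 1 := by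
    rw [dp3, hv'def, smul_dotProduct, dotProduct_smul, smul_eq_mul,
      smul_eq_mul, ← ht2]
    field_simp
  have hs_eq : u' ⬝ᵥ W *ᵥ v' = s := by
    rw [hu'def, hv'def, Matrix.mulVec_smul, smul_dotProduct, dotProduct_smul,
      smul_eq_mul, smul_eq_mul, hWv, ← ht2]
    field_simp
  have hle := dot_le_one ρ hpsd htr u' v' hu1 hv1
  rw [← hW] at hle
  linarith [hs_eq, hle]
end
end

section
/- Let ρ = χ(x₁,x₂,x₃,x₄) be an X-state and F_ε = ε|0⟩⟨0| + |1⟩⟨1|. The filtered (unnormalized) state (F_ε⊗F_ε) ρ (F_ε⊗F_ε)† has trace x₃ + ε²(x₂ + x₁ε²), and the normalized filtered state has correlation-matrix singular values 2|x₄|ε² / (x₃ + ε²(x₂ + x₁ε²)) (with multiplicity two) and |x₃ + ε²(−x₂ + x₁ε²)| / (x₃ + ε²(x₂ + x₁ε²)). -/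
noncomputable section
open Matrix Kronecker

/-- `ketbra a b c d = |ab⟩⟨cd|` in the computational product basis. -/
def ketbra (a b c d : Fin 2) : Matrix (Fin 2 × Fin 2) (Fin 2 × Fin 2) ℂ :=
  Matrix.single a c 1 ⊗ₖ Matrix.single b d 1

/-- The X-state χ(x₁,x₂,x₃,x₄). -/
def chi (x1 x2 x3 x4 : ℝ) : Matrix (Fin 2 × Fin 2) (Fin 2 × Fin 2) ℂ :=
  (x1 : ℂ) • ketbra 0 0 0 0 + (x2 : ℂ) • ketbra 0 1 0 1 + (x3 : ℂ) • ketbra 1 1 1 1 +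
    (x4 : ℂ) • (ketbra 0 0 1 1 + ketbra 1 1 0 0)

/-- The local filter F_ε = ε|0⟩⟨0| + |1⟩⟨1| on a qubit. -/
def filt (ε : ℝ) : Matrix (Fin 2) (Fin 2) ℂ :=
  (ε : ℂ) • Matrix.single 0 0 1 + Matrix.single 1 1 1

lemma kron_ct (A B : Matrix (Fin 2) (Fin 2) ℂ) : (A ⊗ₖ B)ᴴ = Aᴴ ⊗ₖ Bᴴ := by
  ext ⟨i,j⟩ ⟨k,l⟩
  simp [Matrix.conjTranspose_apply, Matrix.kroneckerMap_apply]

lemma filt_std (ε : ℝ) (a c : Fin 2) :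
    filt ε * Matrix.single a c 1 * (filt ε)ᴴ =
      ((![(ε:ℂ),1] a) * (![(ε:ℂ),1] c)) • Matrix.single a c 1 := by
  fin_cases a <;> fin_cases c <;> ext i j <;> fin_cases i <;> fin_cases j <;>
    simp [filt, Matrix.mul_apply, Fin.sum_univ_two, Matrix.single,
      Matrix.conjTranspose_apply, Complex.conj_ofReal]

lemma filt_ketbra (ε : ℝ) (a b c d : Fin 2) :
    (filt ε ⊗ₖ filt ε) * ketbra a b c d * (filt ε ⊗ₖ filt ε)ᴴ =
      ((![(ε:ℂ),1] a) * (![(ε:ℂ),1] c) * ((![(ε:ℂ),1] b) * (![(ε:ℂ),1] d))) • ketbra a b c d := by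
  rw [ketbra, kron_ct, ← Matrix.mul_kronecker_mul, ← Matrix.mul_kronecker_mul, filt_std, filt_std,
    Matrix.smul_kronecker, Matrix.kronecker_smul, smul_smul]

lemma filt_chi (x1 x2 x3 x4 ε : ℝ) :
    (filt ε ⊗ₖ filt ε) * chi x1 x2 x3 x4 * (filt ε ⊗ₖ filt ε)ᴴ =
      chi (x1*ε^4) (x2*ε^2) x3 (x4*ε^2) := by
  simp only [chi, Matrix.add_mul, Matrix.mul_add, Matrix.smul_mul, Matrix.mul_smul, filt_ketbra]
  push_cast
  simp only [Matrix.cons_val_zero, Matrix.cons_val_one, Matrix.head_cons, smul_smul]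
  ring_nf
  module

lemma trace_chi (y1 y2 y3 y4 : ℝ) : (chi y1 y2 y3 y4).trace = ((y1+y2+y3 : ℝ) : ℂ) := by
  simp [chi, ketbra, Matrix.trace_add, Matrix.trace_smul, Matrix.trace_kronecker,
    Matrix.trace_fin_two, Matrix.single]

lemma corr_chi (y1 y2 y3 y4 : ℝ) :
    corr (chi y1 y2 y3 y4) = !![2*y4,0,0;0,-2*y4,0;0,0,y1-y2+y3] := by
  ext j k
  fin_cases j <;> fin_cases k <;>
    simp [corr, chi, ketbra, Matrix.add_mul, Matrix.smul_mul, Matrix.trace_add, Matrix.trace_smul,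
      ← Matrix.mul_kronecker_mul, Matrix.trace_kronecker, Matrix.trace_fin_two,
      Matrix.mul_apply, Fin.sum_univ_two, Matrix.single, σp, Complex.ext_iff,
      Matrix.vecHead, Matrix.vecTail] <;>
    ring

lemma corr_smul (r : ℝ) (ρ : Matrix (Fin 2 × Fin 2) (Fin 2 × Fin 2) ℂ) :
    corr (((r : ℝ) : ℂ)⁻¹ • ρ) = r⁻¹ • corr ρ := by
  ext j k
  simp [corr, Matrix.smul_mul, Matrix.trace_smul, ← Complex.ofReal_inv, Complex.re_ofReal_mul]

/-- Filtering an X-state with F_ε on both qubits: the unnormalized filtered state has trace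
x₃ + ε²(x₂ + x₁ε²), and the normalized filtered state has correlation-matrix singular values
2|x₄|ε²/c (twice) and |x₃ + ε²(−x₂ + x₁ε²)|/c, with c the above trace. -/
theorem filtered_X_state (x1 x2 x3 x4 ε : ℝ)
    (hsum : x1 + x2 + x3 = 1) (h1 : 0 ≤ x1) (h2 : 0 ≤ x2) (h3 : 0 ≤ x3)
    (h4 : x4 ^ 2 ≤ x1 * x3) (hε : ε ∈ Set.Ioc (0 : ℝ) 1)
    (ρ' : Matrix (Fin 2 × Fin 2) (Fin 2 × Fin 2) ℂ)
    (hρ' : ρ' = (filt ε ⊗ₖ filt ε) * chi x1 x2 x3 x4 * (filt ε ⊗ₖ filt ε)ᴴ) :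
    ρ'.trace = ((x3 + ε ^ 2 * (x2 + x1 * ε ^ 2) : ℝ) : ℂ) ∧
    (∀ t : ℝ,
      (t • (1 : Matrix (Fin 3) (Fin 3) ℝ) -
        (corr (((x3 + ε ^ 2 * (x2 + x1 * ε ^ 2) : ℝ) : ℂ)⁻¹ • ρ'))ᵀ *
          corr (((x3 + ε ^ 2 * (x2 + x1 * ε ^ 2) : ℝ) : ℂ)⁻¹ • ρ')).det =
      (t - (2 * |x4| * ε ^ 2 / (x3 + ε ^ 2 * (x2 + x1 * ε ^ 2))) ^ 2) *
      (t - (2 * |x4| * ε ^ 2 / (x3 + ε ^ 2 * (x2 + x1 * ε ^ 2))) ^ 2) *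
      (t - (|x3 + ε ^ 2 * (-x2 + x1 * ε ^ 2)| / (x3 + ε ^ 2 * (x2 + x1 * ε ^ 2))) ^ 2)) := by
  obtain ⟨hε0, hε1⟩ := hε
  set c : ℝ := x3 + ε ^ 2 * (x2 + x1 * ε ^ 2) with hc
  constructor
  · rw [hρ', filt_chi, trace_chi]
    norm_cast
    rw [hc]
    ring
  · intro t
    set a : ℝ := c⁻¹ * (2*(x4*ε^2)) with ha
    set d : ℝ := c⁻¹ * (x1*ε^4-x2*ε^2+x3) with hd
    have hW : corr ((c : ℂ)⁻¹ • ρ') = !![a,0,0;0,-a,0;0,0,d] := by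
      rw [hρ', filt_chi, corr_smul, corr_chi]
      ext i j
      fin_cases i <;> fin_cases j <;>
        simp [Matrix.smul_apply, ha, hd, Matrix.vecHead, Matrix.vecTail, Function.comp] <;> ring
    have hWt : (!![a,0,0;0,-a,0;0,0,d])ᵀ = !![a,0,0;0,-a,0;0,0,d] := by
      ext i j
      fin_cases i <;> fin_cases j <;> rfl
    have habs1 : (2 * |x4| * ε ^ 2 / c) ^ 2 = a ^ 2 := by
      rw [ha, div_pow, mul_pow, mul_pow, mul_pow, mul_pow, sq_abs]
      field_simp
    have habs2 : (|x3 + ε ^ 2 * (-x2 + x1 * ε ^ 2)| / c) ^ 2 = d ^ 2 := by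
      rw [hd, div_pow, sq_abs, mul_pow]
      field_simp
      ring
    rw [hW, hWt, habs1, habs2, Matrix.det_fin_three]
    simp [Matrix.mul_apply, Fin.sum_univ_three, Matrix.sub_apply, Matrix.smul_apply,
      Matrix.one_apply, Matrix.vecHead, Matrix.vecTail, Function.comp, smul_eq_mul]
    ring
end
end
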